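/- Let E, F ∈ ℂ[x, y] be polynomials satisfying E(x, y)·F(x, y−2) − E(x, y+2)·F(x, y) = y. Then E·F ≠ 0, and writing E = Σ_{i=0}^m a_i(x)y^i and F = Σ_{i=0}^n b_i(x)y^i with a_m, b_n ≠ 0, one has m + n = 2 and a_m(x)·b_n(x) = −1/4. -/
import Mathlib


open Polynomial

lemma key_coeff {R : Type*} [CommRing R] (G : R[X]) (hd : 1 ≤ G.natDegree) :
    (G - G.comp (X + C (2:R))).coeff (G.natDegree - 1) =
      -(2 * (G.natDegree : R) * G.leadingCoeff) := by
  have htl : G.comp (X + C (2:R)) = taylor 2 G := (taylor_apply 2 G).symm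
  rw [coeff_sub, htl, taylor_coeff]
  set d := G.natDegree with hdd
  set P := hasseDeriv (d-1) G with hP
  have hP0 : P.coeff 0 = G.coeff (d-1) := by
    rw [hP, hasseDeriv_coeff]; simp
  have hP1 : P.coeff 1 = (d : R) * G.coeff d := by
    rw [hP, hasseDeriv_coeff]
    have h1 : 1 + (d - 1) = d := by omega
    rw [h1]
    have hch : d.choose (d-1) = d := by
      rw [Nat.choose_symm_of_eq_add (show d = (d-1) + 1 by omega), Nat.choose_one_right]
    rw [hch]
  have hPle : P.natDegree ≤ 1 := natDegree_le_iff_coeff_eq_zero.mpr (fun m hm => by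
    rw [hP, hasseDeriv_coeff]
    have hz : G.coeff (m + (d-1)) = 0 := coeff_eq_zero_of_natDegree_lt (by omega)
    rw [hz, mul_zero])
  rw [eval_eq_sum_range' (show P.natDegree < 2 by omega) (2:R)]
  rw [Finset.sum_range_succ, Finset.sum_range_one, hP0, hP1]
  rw [leadingCoeff]
  ring

/-- ℂ[x,y] is modelled as (ℂ[x])[y]; composition is substitution in y. -/
theorem stmt14 (E F : Polynomial (Polynomial ℂ))
    (h : E * F.comp (X - 2) - E.comp (X + 2) * F = X) :
    E * F ≠ 0 ∧ E.natDegree + F.natDegree = 2 ∧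
    E.leadingCoeff * F.leadingCoeff = Polynomial.C (-(1 / 4) : ℂ) := by
  have h2 : (2 : Polynomial (Polynomial ℂ)) = C (2 : Polynomial ℂ) :=
    (map_ofNat C 2).symm
  have hE : E ≠ 0 := by
    rintro rfl
    simp only [zero_mul, zero_comp, zero_sub, sub_zero, neg_zero] at h
    exact X_ne_zero h.symm
  have hF : F ≠ 0 := by
    rintro rfl
    simp only [zero_comp, mul_zero, sub_zero, sub_self] at h
    exact X_ne_zero h.symm
  set Fc := F.comp (X - 2) with hFcdef
  have hdX : (X - (2:Polynomial (Polynomial ℂ))).natDegree = 1 := by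
    rw [h2]; exact natDegree_X_sub_C 2
  have hFc0 : Fc.natDegree = F.natDegree := by
    rw [hFcdef, natDegree_comp, hdX, mul_one]
  have hFclead : Fc.leadingCoeff = F.leadingCoeff := by
    rw [hFcdef, leadingCoeff_comp (by rw [hdX]; norm_num), h2, leadingCoeff_X_sub_C,
      one_pow, mul_one]
  have hFcne : Fc ≠ 0 := by
    intro h0
    apply hF
    rw [← leadingCoeff_eq_zero, ← hFclead, h0, leadingCoeff_zero]
  set G := E * Fc with hGdef
  have hGne : G ≠ 0 := mul_ne_zero hE hFcne
  have hGdeg : G.natDegree = E.natDegree + F.natDegree := by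
    rw [hGdef, natDegree_mul hE hFcne, hFc0]
  have hGlead : G.leadingCoeff = E.leadingCoeff * F.leadingCoeff := by
    rw [hGdef, leadingCoeff_mul, hFclead]
  have hleadne : G.leadingCoeff ≠ 0 := leadingCoeff_ne_zero.mpr hGne
  have hh : G - G.comp (X + 2) = X := by
    rw [hGdef, mul_comp, hFcdef, comp_assoc]
    have hxc : (X - (2:Polynomial (Polynomial ℂ))).comp (X + 2) = X := by
      rw [sub_comp, X_comp, h2, C_comp]
      ring
    rw [hxc, comp_X]
    exact h
  have hd1 : 1 ≤ G.natDegree := by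
    by_contra hd
    push_neg at hd
    have hc := eq_C_of_natDegree_eq_zero (Nat.lt_one_iff.mp hd)
    rw [hc, C_comp, sub_self] at hh
    exact X_ne_zero hh.symm
  have hcoeff := key_coeff G hd1
  rw [← h2, hh] at hcoeff
  refine ⟨?_, ?_, ?_⟩
  · intro h0
    rcases mul_eq_zero.mp h0 with h0 | h0
    · exact hE h0
    · exact hF h0
  all_goals {
    rcases lt_trichotomy G.natDegree 2 with hlt | heq | hgt
    · exfalso
      have hd1' : G.natDegree = 1 := by omega
      rw [hd1'] at hcoeff
      simp only [Nat.cast_one] at hcoeff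
      rw [coeff_X_zero] at hcoeff
      apply hleadne
      have h2ne : (2 : Polynomial ℂ) ≠ 0 := two_ne_zero
      have := hcoeff.symm
      rw [neg_eq_zero, mul_one] at this
      exact (mul_eq_zero.mp this).resolve_left h2ne
    · first
      | (rw [hGdeg] at heq; exact heq)
      | (rw [heq] at hcoeff
         rw [show (2:ℕ)-1 = 1 by norm_num, coeff_X_one] at hcoeff
         simp only [Nat.cast_ofNat] at hcoeff
         rw [← hGlead]
         have h4 : (4 : Polynomial ℂ) * G.leadingCoeff
             = (4 : Polynomial ℂ) * C (-(1/4) : ℂ) := by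
           have hr : (4 : Polynomial ℂ) * C (-(1/4) : ℂ) = -1 := by
             rw [show (4 : Polynomial ℂ) = C (4:ℂ) from (map_ofNat C 4).symm, ← C_mul]
             norm_num
           rw [hr]
           linear_combination hcoeff
         exact mul_left_cancel₀ (by norm_num) h4)
    · exfalso
      have hne1 : G.natDegree - 1 ≠ 1 := by omega
      rw [coeff_X, if_neg (fun hx => hne1 hx.symm)] at hcoeff
      apply hleadne
      have := hcoeff.symm
      rw [neg_eq_zero] at this
      rcases mul_eq_zero.mp this with h0 | h0
      · exfalso
        rcases mul_eq_zero.mp h0 with h0 | h0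
        · exact two_ne_zero h0
        · have : G.natDegree = 0 := by exact_mod_cast Nat.cast_eq_zero.mp (by exact_mod_cast h0)
          omega
      · exact h0
  }
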